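/- Let m and n be coprime positive integers. Then, in the field of rational functions over ℚ, Φ_{n·m}(X) = ∏_{d ∣ m} Φ_n(X^d)^{μ(m/d)}, where the product runs over all positive divisors d of m, μ is the Möbius function, and the factors with negative exponent are interpreted as inverses in the field of rational functions. -/

import Mathlib

open Polynomial ArithmeticFunction

private lemma divisors_prime_mul (p j : ℕ) (hp : p.Prime) (hj : 0 < j) :
    (p * j).divisors =
      (j.divisors.filter (fun d => ¬ p ∣ d)) ∪ (j.divisors.image (fun d => p * d)) := by
  ext e
  simp only [Nat.mem_divisors, Finset.mem_union, Finset.mem_filter, Finset.mem_image,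
    mul_ne_zero_iff]
  constructor
  · rintro ⟨he, h0⟩
    by_cases hpe : p ∣ e
    · obtain ⟨d, rfl⟩ := hpe
      refine Or.inr ⟨d, ⟨?_, hj.ne'⟩, rfl⟩
      exact (mul_dvd_mul_iff_left (Nat.Prime.ne_zero hp)).mp he
    · exact Or.inl ⟨⟨(Nat.Coprime.dvd_of_dvd_mul_left
        ((Nat.Prime.coprime_iff_not_dvd hp).mpr hpe).symm he), hj.ne'⟩, hpe⟩
  · rintro (⟨⟨he, -⟩, -⟩ | ⟨d, ⟨hd, -⟩, rfl⟩)
    · exact ⟨he.mul_left p, hp.ne_zero, hj.ne'⟩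
    · exact ⟨mul_dvd_mul_left p hd, hp.ne_zero, hj.ne'⟩

private lemma step_lemma (p j n : ℕ) (hp : p.Prime) (hpn : ¬ p ∣ n) (hj : 0 < j) :
    expand ℚ p (∏ d ∈ j.divisors, cyclotomic (n * d) ℚ) =
      ∏ e ∈ (p * j).divisors, cyclotomic (n * e) ℚ := by
  rw [divisors_prime_mul p j hp hj, Finset.prod_union, Finset.prod_image, map_prod]
  · have key : ∀ d ∈ j.divisors, expand ℚ p (cyclotomic (n * d) ℚ) =
        (if p ∣ d then 1 else cyclotomic (n * d) ℚ) * cyclotomic (n * (p * d)) ℚ := by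
      intro d hd
      by_cases hpd : p ∣ d
      · rw [if_pos hpd, one_mul, show n * (p * d) = n * d * p by ring,
          cyclotomic_expand_eq_cyclotomic hp (Dvd.dvd.mul_left hpd n)]
      · have : ¬ p ∣ n * d := by
          rw [hp.dvd_mul]; tauto
        rw [if_neg hpd, cyclotomic_expand_eq_cyclotomic_mul hp this,
          show n * (p * d) = n * d * p by ring, mul_comm]
    rw [Finset.prod_congr rfl key, Finset.prod_mul_distrib]
    congr 1
    rw [Finset.prod_filter]
    exact Finset.prod_congr rfl fun d _ => by by_cases hc : p ∣ d <;> simp [hc]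
  · intro a _ b _ hab
    exact Nat.eq_of_mul_eq_mul_left hp.pos hab
  · rw [Finset.disjoint_left]
    rintro e he hmem
    obtain ⟨d, -, rfl⟩ := Finset.mem_image.mp hmem
    exact (Finset.mem_filter.mp he).2 ⟨d, rfl⟩

private lemma expand_cyclotomic_eq_prod (n : ℕ) (hn : 0 < n) :
    ∀ k, 0 < k → k.Coprime n →
      expand ℚ k (cyclotomic n ℚ) = ∏ d ∈ k.divisors, cyclotomic (n * d) ℚ := by
  intro k
  induction k using Nat.strong_induction_on with
  | _ k ih =>
    intro hk hkn
    rcases eq_or_lt_of_le (show 1 ≤ k from hk) with h1 | h1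
    · rw [← h1, expand_one]
      simp
    · set p := k.minFac with hpdef
      have hp : p.Prime := Nat.minFac_prime (by omega)
      have hpk : p ∣ k := Nat.minFac_dvd k
      obtain ⟨j, hkj⟩ := hpk
      have hj : 0 < j := by
        rcases Nat.eq_zero_or_pos j with rfl | h; · omega
        · assumption
      have hjk : j < k := by
        rw [hkj]
        exact (Nat.lt_mul_iff_one_lt_left hj).mpr hp.one_lt
      have hjn : j.Coprime n :=
        Nat.Coprime.coprime_dvd_left (hkj ▸ dvd_mul_left j p) hkn
      have hpn : ¬ p ∣ n :=
        (Nat.Prime.coprime_iff_not_dvd hp).mp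
          (Nat.Coprime.coprime_dvd_left (Nat.minFac_dvd k) hkn)
      rw [hkj, ← expand_expand, ih j hjk hj hjn, step_lemma p j n hp hpn hj]

theorem cyclotomic_mul_eq_prod_zpow_of_coprime (m n : ℕ) (hm : 0 < m) (hn : 0 < n)
    (h : Nat.Coprime m n) :
    (algebraMap (Polynomial ℚ) (RatFunc ℚ) (cyclotomic (n * m) ℚ)) =
      ∏ d ∈ m.divisors,
        (algebraMap (Polynomial ℚ) (RatFunc ℚ) ((cyclotomic n ℚ).comp (X ^ d))) ^
          (moebius (m / d)) := by
  have key := (ArithmeticFunction.prod_eq_iff_prod_pow_moebius_eq_on_of_nonzero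
    (R := RatFunc ℚ) {k | k.Coprime n}
    (fun a b hab hb => Nat.Coprime.coprime_dvd_left hab hb)
    (f := fun k => algebraMap (Polynomial ℚ) (RatFunc ℚ) (cyclotomic (n * k) ℚ))
    (g := fun k => algebraMap (Polynomial ℚ) (RatFunc ℚ) (expand ℚ k (cyclotomic n ℚ)))
    ?_ ?_).mp ?_ m hm h
  · rw [← key, Nat.prod_divisorsAntidiagonal'
      (f := fun a b => algebraMap (Polynomial ℚ) (RatFunc ℚ)
        (expand ℚ b (cyclotomic n ℚ)) ^ (moebius a))]
    exact Finset.prod_congr rfl fun d _ => by rw [expand_eq_comp_X_pow]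
  · intro k hk
    simp only [ne_eq, IsFractionRing.to_map_eq_zero_iff]
    exact cyclotomic_ne_zero _ ℚ
  · intro k hk
    simp only [ne_eq, IsFractionRing.to_map_eq_zero_iff]
    rw [Polynomial.expand_eq_zero hk]
    exact cyclotomic_ne_zero _ ℚ
  · intro k hk hks
    rw [← map_prod, expand_cyclotomic_eq_prod n hn k hk hks]
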